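/- Let G_1, …, G_B be i.i.d. random real m×n matrices with square-integrable entries, mean matrix M = E[G_1], and row-wise covariance matrix C = E[(G_1 − M)(G_1 − M)ᵀ]. Let Ḡ = (1/B)·(G_1 + ⋯ + G_B) be their average. Then E[‖M − Ḡ‖_{S1}] ≤ tr(C^{1/2}) / √B, where C^{1/2} is the positive semidefinite square root of C. -/

import Mathlib

open MeasureTheory ProbabilityTheory Matrix

section
open scoped ComplexOrder
/-- The positive semidefinite square root, as defined in the older Mathlib (removed since). -/
noncomputable def Matrix.PosSemidef.sqrt {n 𝕜 : Type*} [Fintype n] [RCLike 𝕜] [DecidableEq n]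
    {A : Matrix n n 𝕜} (hA : A.PosSemidef) : Matrix n n 𝕜 :=
  hA.1.eigenvectorUnitary.1 * Matrix.diagonal ((↑) ∘ (√·) ∘ hA.1.eigenvalues) *
    (star hA.1.eigenvectorUnitary : Matrix n n 𝕜)
end

section SqrtAux
open scoped ComplexOrder MatrixOrder
variable {n' 𝕜 : Type*} [Fintype n'] [RCLike 𝕜] [DecidableEq n']

lemma Matrix.PosSemidef.sqrt_eq_cfcSqrt {A : Matrix n' n' 𝕜} (hA : A.PosSemidef) :
    hA.sqrt = CFC.sqrt A := by
  rw [CFC.sqrt_eq_cfc, cfc_nnreal_eq_real _ A, hA.1.cfc_eq]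
  simp only [Matrix.IsHermitian.cfc, Real.coe_sqrt, Real.coe_toNNReal', Unitary.conjStarAlgAut_apply]
  rw [Matrix.PosSemidef.sqrt]
  congr 3
  funext i
  simp [hA.eigenvalues_nonneg i]

lemma Matrix.PosSemidef.posSemidef_sqrt {A : Matrix n' n' 𝕜} (hA : A.PosSemidef) :
    hA.sqrt.PosSemidef := by
  rw [hA.sqrt_eq_cfcSqrt]
  exact (CFC.sqrt_nonneg A).posSemidef

lemma Matrix.PosSemidef.sqrt_mul_self {A : Matrix n' n' 𝕜} (hA : A.PosSemidef) :
    hA.sqrt * hA.sqrt = A := by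
  rw [hA.sqrt_eq_cfcSqrt]
  exact CFC.sqrt_mul_sqrt_self A hA.nonneg

lemma Matrix.PosSemidef.sq_sqrt {A : Matrix n' n' 𝕜} (hA : A.PosSemidef) :
    hA.sqrt ^ 2 = A := by
  rw [sq, hA.sqrt_mul_self]

lemma Matrix.PosSemidef.eq_sqrt_of_sq_eq {A B : Matrix n' n' 𝕜} (hA : A.PosSemidef)
    (hB : B.PosSemidef) (hsq : A ^ 2 = B) : A = hB.sqrt := by
  rw [hB.sqrt_eq_cfcSqrt]
  exact ((CFC.sqrt_eq_iff B A hB.nonneg hA.nonneg).mpr (by rw [← sq]; exact hsq)).symm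

end SqrtAux

section Aux

variable {k : Type*} [Fintype k]

lemma trace_nonneg_of_posSemidef {P : Matrix k k ℝ} (hP : P.PosSemidef) : 0 ≤ P.trace := by
  classical
  refine Finset.sum_nonneg fun i _ => ?_
  have h := hP.dotProduct_mulVec_nonneg (Pi.single i 1)
  simpa [dotProduct, mulVec, Pi.single_apply, Finset.sum_ite_eq, Finset.mul_sum] using h

lemma trace_mul_nonneg_of_posSemidef [DecidableEq k] {P Q : Matrix k k ℝ}
    (hP : P.PosSemidef) (hQ : Q.PosSemidef) : 0 ≤ (P * Q).trace := by
  obtain ⟨A, hA⟩ : ∃ A, Q = star A * A :=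
    ⟨hQ.sqrt, by rw [star_eq_conjTranspose, hQ.posSemidef_sqrt.1.eq, hQ.sqrt_mul_self]⟩
  have h2 : (P * Q).trace = (A * P * Aᴴ).trace := by
    rw [hA, star_eq_conjTranspose, ← Matrix.mul_assoc, trace_mul_comm, ← Matrix.mul_assoc]
  rw [h2]
  exact trace_nonneg_of_posSemidef (hP.mul_mul_conjTranspose_same A)

lemma posSemidef_smul_real {c : ℝ} (hc : 0 ≤ c) {P : Matrix k k ℝ} (hP : P.PosSemidef) :
    (c • P).PosSemidef := by
  refine Matrix.PosSemidef.of_dotProduct_mulVec_nonneg ?_ fun x => ?_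
  · unfold Matrix.IsHermitian
    rw [conjTranspose_smul, hP.1]
    simp
  · rw [smul_mulVec, dotProduct_smul, smul_eq_mul]
    exact mul_nonneg hc (hP.dotProduct_mulVec_nonneg x)

lemma nuclearNorm_nonneg' {m n : ℕ} (A : Matrix (Fin m) (Fin n) ℝ) :
    0 ≤ ((Matrix.posSemidef_self_mul_conjTranspose A).sqrt).trace :=
  trace_nonneg_of_posSemidef (Matrix.posSemidef_self_mul_conjTranspose A).posSemidef_sqrt

lemma integrable_mul_of_memL2 {Ω : Type*} [MeasurableSpace Ω] {μ : Measure Ω} {f g : Ω → ℝ}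
    (hf : MemLp f 2 μ) (hg : MemLp g 2 μ) : Integrable (fun ω => f ω * g ω) μ := by
  have h1 := (hf.add hg).integrable_sq
  have h2 := hf.integrable_sq
  have h3 := hg.integrable_sq
  have h4 := (((h1.sub h2).sub h3).const_mul (1 / 2 : ℝ))
  refine h4.congr ?_
  filter_upwards with ω
  simp only [Pi.sub_apply, Pi.add_apply]
  ring

/-- Pointwise AM-GM type bound for the nuclear norm. -/
lemma trace_sqrt_le_aux {m n : ℕ} (A : Matrix (Fin m) (Fin n) ℝ)
    {Y : Matrix (Fin m) (Fin m) ℝ} (hY : Y.PosDef) :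
    ((Matrix.posSemidef_self_mul_conjTranspose A).sqrt).trace
      ≤ ((A * Aᴴ * Y⁻¹).trace + Y.trace) / 2 := by
  set Z := (Matrix.posSemidef_self_mul_conjTranspose A).sqrt with hZdef
  have hZ : Z.PosSemidef := (Matrix.posSemidef_self_mul_conjTranspose A).posSemidef_sqrt
  have hZZ : Z * Z = A * Aᴴ := (Matrix.posSemidef_self_mul_conjTranspose A).sqrt_mul_self
  have hYdet : IsUnit Y.det := isUnit_iff_isUnit_det _ |>.1 hY.isUnit
  have hYinv : Y⁻¹.PosSemidef := hY.inv.posSemidef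
  have hherm : (Z - Y)ᴴ = Z - Y := by
    rw [conjTranspose_sub, hZ.1, hY.isHermitian]
  have h0 : 0 ≤ ((Z - Y) * Y⁻¹ * (Z - Y)).trace := by
    have h := trace_nonneg_of_posSemidef (hYinv.mul_mul_conjTranspose_same (Z - Y))
    rwa [hherm] at h
  have hexp : (Z - Y) * Y⁻¹ * (Z - Y)
      = Z * Y⁻¹ * Z - Z * Y⁻¹ * Y - Y * Y⁻¹ * Z + Y * Y⁻¹ * Y := by
    rw [Matrix.sub_mul, Matrix.sub_mul, Matrix.mul_sub, Matrix.mul_sub]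
    abel
  have hZY : Z * Y⁻¹ * Y = Z := by
    rw [Matrix.mul_assoc, Matrix.nonsing_inv_mul Y hYdet, Matrix.mul_one]
  have hYY : Y * Y⁻¹ = 1 := Matrix.mul_nonsing_inv Y hYdet
  have hcyc : (Z * Y⁻¹ * Z).trace = (A * Aᴴ * Y⁻¹).trace := by
    rw [trace_mul_cycle, hZZ]
  rw [hexp] at h0
  simp only [trace_add, trace_sub, hZY, hYY, Matrix.one_mul] at h0
  rw [hcyc] at h0
  linarith

end Aux

/-- The nuclear (Schatten-1) norm of a real `m×n` matrix `A`: the trace of the positive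
semidefinite square root of `A * Aᵀ` (equivalently, the sum of the singular values of `A`). -/
noncomputable def nuclearNorm {m n : ℕ} (A : Matrix (Fin m) (Fin n) ℝ) : ℝ :=
  ((Matrix.posSemidef_self_mul_conjTranspose A).sqrt).trace

/-- Let `G 0, …, G (B-1)` be i.i.d. random real `m×n` matrices with square-integrable entries,
mean matrix `M = E[G b]`, and row-wise covariance matrix `C = E[(G b − M)(G b − M)ᵀ]`.  Let
`Ḡ = (1/B)·(G 0 + ⋯ + G (B-1))` be their average.  Then
`E[‖M − Ḡ‖_{S1}] ≤ tr(C^{1/2}) / √B`, where `C^{1/2}` is the positive semidefinite square root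
of `C`.  (Positive semidefiniteness of `C`, recorded in `hCpsd`, is a consequence of the other
hypotheses, and is needed to state the square root.) -/
theorem stmt4 {m n B : ℕ} (hB : 0 < B)
    {Ω : Type*} [MeasurableSpace Ω] (μ : Measure Ω) [IsProbabilityMeasure μ]
    (G : Fin B → Ω → (Fin m → Fin n → ℝ))
    (hmeas : ∀ b, Measurable (G b))
    (hindep : iIndepFun G μ)
    (hident : ∀ b b', IdentDistrib (G b) (G b') μ μ)
    (hsq : ∀ b i j, MemLp (fun ω => G b ω i j) 2 μ)
    (M : Matrix (Fin m) (Fin n) ℝ)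
    (hmean : ∀ b i j, ∫ ω, G b ω i j ∂μ = M i j)
    (C : Matrix (Fin m) (Fin m) ℝ)
    (hC : C = Matrix.of fun i i' =>
      ∫ ω, ∑ j, (G ⟨0, hB⟩ ω i j - M i j) * (G ⟨0, hB⟩ ω i' j - M i' j) ∂μ)
    (hCpsd : C.PosSemidef) :
    ∫ ω, nuclearNorm (M - Matrix.of fun i j => (B : ℝ)⁻¹ * ∑ b, G b ω i j) ∂μ
      ≤ hCpsd.sqrt.trace / Real.sqrt B := by
  classical
  have hBne : (B : ℝ) ≠ 0 := Nat.cast_ne_zero.mpr hB.ne'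
  have hBpos : (0:ℝ) < B := by exact_mod_cast hB
  set b0 : Fin B := ⟨0, hB⟩
  -- basic integrability facts
  have hXsq : ∀ (b : Fin B) (i : Fin m) (j : Fin n),
      MemLp (fun ω => M i j - G b ω i j) 2 μ :=
    fun b i j => (memLp_const _).sub (hsq b i j)
  have hInt : ∀ (b b' : Fin B) (i k : Fin m) (j : Fin n),
      Integrable (fun ω => (M i j - G b ω i j) * (M k j - G b' ω k j)) μ :=
    fun b b' i k j => integrable_mul_of_memL2 (hXsq b i j) (hXsq b' k j)
  have hIntSum : ∀ (b b' : Fin B) (i k : Fin m),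
      Integrable (fun ω => ∑ j, (M i j - G b ω i j) * (M k j - G b' ω k j)) μ :=
    fun b b' i k => integrable_finset_sum _ fun j _ => hInt b b' i k j
  -- zero mean of centered entries
  have hzero : ∀ (b : Fin B) (i : Fin m) (j : Fin n),
      ∫ ω, (M i j - G b ω i j) ∂μ = 0 := by
    intro b i j
    rw [integral_sub (integrable_const _) ((hsq b i j).integrable one_le_two)]
    simp [hmean b i j]
  -- cross terms vanish
  have hcross : ∀ (b b' : Fin B), b ≠ b' → ∀ (i k : Fin m) (j : Fin n),
      ∫ ω, (M i j - G b ω i j) * (M k j - G b' ω k j) ∂μ = 0 := by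
    intro b b' hbb' i k j
    have hmeas1 : Measurable (fun x : Fin m → Fin n → ℝ => M i j - x i j) :=
      measurable_const.sub ((measurable_pi_apply j).comp (measurable_pi_apply i))
    have hmeas2 : Measurable (fun x : Fin m → Fin n → ℝ => M k j - x k j) :=
      measurable_const.sub ((measurable_pi_apply j).comp (measurable_pi_apply k))
    have hind : IndepFun (fun ω => M i j - G b ω i j) (fun ω => M k j - G b' ω k j) μ :=
      (hindep.indepFun hbb').comp hmeas1 hmeas2
    have h := hind.integral_fun_mul_eq_mul_integral ((hXsq b i j).integrable one_le_two).aestronglyMeasurable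
      ((hXsq b' k j).integrable one_le_two).aestronglyMeasurable
    rw [hzero, hzero, mul_zero] at h
    exact h
  -- identically distributed diagonal terms
  have hsame : ∀ (b : Fin B) (i k : Fin m),
      ∫ ω, ∑ j, (M i j - G b ω i j) * (M k j - G b ω k j) ∂μ = C i k := by
    intro b i k
    have hφ : Measurable (fun x : Fin m → Fin n → ℝ =>
        ∑ j, (M i j - x i j) * (M k j - x k j)) := by
      refine Finset.measurable_sum _ fun j _ => Measurable.mul ?_ ?_
      · exact measurable_const.sub ((measurable_pi_apply j).comp (measurable_pi_apply i))
      · exact measurable_const.sub ((measurable_pi_apply j).comp (measurable_pi_apply k))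
    have h := ((hident b b0).comp hφ).integral_eq
    have h2 : (∫ ω, ∑ j, (M i j - G b ω i j) * (M k j - G b ω k j) ∂μ)
        = ∫ ω, ∑ j, (M i j - G b0 ω i j) * (M k j - G b0 ω k j) ∂μ := h
    rw [h2, hC]
    simp only [Matrix.of_apply]
    congr 1
    funext ω
    refine Finset.sum_congr rfl fun j _ => ?_
    ring
  -- key covariance computation for the average
  have hEntry : ∀ (i k : Fin m),
      ∫ ω, ∑ j, (M i j - (B:ℝ)⁻¹ * ∑ b, G b ω i j) * (M k j - (B:ℝ)⁻¹ * ∑ b, G b ω k j) ∂μ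
        = (B:ℝ)⁻¹ * C i k := by
    intro i k
    have h1 : ∀ (ω : Ω) (p : Fin m) (j : Fin n),
        M p j - (B:ℝ)⁻¹ * ∑ b, G b ω p j = (B:ℝ)⁻¹ * ∑ b, (M p j - G b ω p j) := by
      intro ω p j
      rw [Finset.sum_sub_distrib, Finset.sum_const, Finset.card_univ, Fintype.card_fin,
        nsmul_eq_mul]
      field_simp
    have hrw : ∀ ω : Ω,
        (∑ j, (M i j - (B:ℝ)⁻¹ * ∑ b, G b ω i j) * (M k j - (B:ℝ)⁻¹ * ∑ b, G b ω k j))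
        = ((B:ℝ)⁻¹)^2 * ∑ b, ∑ b', ∑ j, (M i j - G b ω i j) * (M k j - G b' ω k j) := by
      intro ω
      have : ∀ j : Fin n,
          (M i j - (B:ℝ)⁻¹ * ∑ b, G b ω i j) * (M k j - (B:ℝ)⁻¹ * ∑ b, G b ω k j)
          = ((B:ℝ)⁻¹)^2 * ∑ b, ∑ b', (M i j - G b ω i j) * (M k j - G b' ω k j) := by
        intro j
        rw [h1 ω i j, h1 ω k j, mul_mul_mul_comm, ← pow_two]
        congr 1
        rw [Finset.sum_mul_sum]
      rw [Finset.sum_congr rfl fun j _ => this j, ← Finset.mul_sum]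
      congr 1
      rw [Finset.sum_comm]
      exact Finset.sum_congr rfl fun b _ => Finset.sum_comm
    rw [integral_congr_ae (Filter.Eventually.of_forall hrw), integral_const_mul,
      integral_finset_sum _ (fun b _ => integrable_finset_sum _ fun b' _ => hIntSum b b' i k)]
    have hval : ∀ b : Fin B,
        ∫ ω, ∑ b', ∑ j, (M i j - G b ω i j) * (M k j - G b' ω k j) ∂μ = C i k := by
      intro b
      rw [integral_finset_sum _ (fun b' _ => hIntSum b b' i k)]
      have : ∀ b' : Fin B,
          (∫ ω, ∑ j, (M i j - G b ω i j) * (M k j - G b' ω k j) ∂μ)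
          = if b' = b then C i k else 0 := by
        intro b'
        by_cases hbb : b' = b
        · subst hbb; simp only [if_true]; exact hsame b' i k
        · simp only [hbb, if_false]
          rw [integral_finset_sum _ (fun j _ => hInt b b' i k j)]
          exact Finset.sum_eq_zero fun j _ => hcross b b' (Ne.symm hbb) i k j
      rw [Finset.sum_congr rfl fun b' _ => this b']
      simp
    rw [Finset.sum_congr rfl fun b _ => hval b]
    simp only [Finset.sum_const, Finset.card_univ, Fintype.card_fin, nsmul_eq_mul]
    field_simp
  -- the main bound for an arbitrary positive definite Y
  have hAvg : ∀ (p : Fin m) (j : Fin n),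
      MemLp (fun ω => M p j - (B:ℝ)⁻¹ * ∑ b, G b ω p j) 2 μ := by
    intro p j
    refine (memLp_const _).sub ?_
    exact MemLp.const_mul (memLp_finset_sum (f := fun b ω => G b ω p j) Finset.univ (fun b (_ : b ∈ Finset.univ) => hsq b p j)) _
  have hIntAvg : ∀ (p q : Fin m) (j : Fin n),
      Integrable (fun ω =>
        (M p j - (B:ℝ)⁻¹ * ∑ b, G b ω p j) * (M q j - (B:ℝ)⁻¹ * ∑ b, G b ω q j)) μ :=
    fun p q j => integrable_mul_of_memL2 (hAvg p j) (hAvg q j)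
  have main : ∀ (Y : Matrix (Fin m) (Fin m) ℝ), Y.PosDef →
      ∫ ω, nuclearNorm (M - Matrix.of fun i j => (B : ℝ)⁻¹ * ∑ b, G b ω i j) ∂μ
        ≤ ((((B:ℝ)⁻¹ • C) * Y⁻¹).trace + Y.trace) / 2 := by
    intro Y hY
    set D : Ω → Matrix (Fin m) (Fin n) ℝ :=
      fun ω => M - Matrix.of fun i j => (B : ℝ)⁻¹ * ∑ b, G b ω i j with hD
    set g : Ω → ℝ := fun ω =>
      ((∑ p, ∑ q, (∑ j, (M p j - (B:ℝ)⁻¹ * ∑ b, G b ω p j)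
        * (M q j - (B:ℝ)⁻¹ * ∑ b, G b ω q j)) * Y⁻¹ q p) + Y.trace) / 2 with hg
    have htr : ∀ ω, (D ω * (D ω)ᴴ * Y⁻¹).trace
        = ∑ p, ∑ q, (∑ j, (M p j - (B:ℝ)⁻¹ * ∑ b, G b ω p j)
          * (M q j - (B:ℝ)⁻¹ * ∑ b, G b ω q j)) * Y⁻¹ q p := by
      intro ω
      simp only [Matrix.trace, Matrix.diag, Matrix.mul_apply, Matrix.conjTranspose_apply,
        Matrix.sub_apply, Matrix.of_apply, star_trivial, hD, Finset.sum_mul]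
    have hle : ∀ ω, nuclearNorm (D ω) ≤ g ω := by
      intro ω
      have := trace_sqrt_le_aux (D ω) hY
      rw [htr ω] at this
      exact this
    have hgInt : Integrable g μ := by
      refine Integrable.div_const ?_ _
      refine Integrable.add ?_ (integrable_const _)
      refine integrable_finset_sum _ fun p _ => integrable_finset_sum _ fun q _ => ?_
      exact (integrable_finset_sum _ fun j _ => hIntAvg p q j).mul_const _
    have hgint_eq : ∫ ω, g ω ∂μ = ((((B:ℝ)⁻¹ • C) * Y⁻¹).trace + Y.trace) / 2 := by
      rw [hg]
      simp only
      rw [integral_div, integral_add ?h1 (integrable_const _), integral_const]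
      case h1 =>
        refine integrable_finset_sum _ fun p _ => integrable_finset_sum _ fun q _ => ?_
        exact (integrable_finset_sum _ fun j _ => hIntAvg p q j).mul_const _
      rw [integral_finset_sum _ (fun p _ => integrable_finset_sum _ fun q _ =>
        (integrable_finset_sum _ fun j _ => hIntAvg p q j).mul_const _)]
      have : ∀ p : Fin m, (∫ ω, ∑ q, (∑ j, (M p j - (B:ℝ)⁻¹ * ∑ b, G b ω p j)
          * (M q j - (B:ℝ)⁻¹ * ∑ b, G b ω q j)) * Y⁻¹ q p ∂μ)
          = ∑ q, ((B:ℝ)⁻¹ * C p q) * Y⁻¹ q p := by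
        intro p
        rw [integral_finset_sum _ (fun q _ =>
          (integrable_finset_sum _ fun j _ => hIntAvg p q j).mul_const _)]
        refine Finset.sum_congr rfl fun q _ => ?_
        rw [integral_mul_const, hEntry p q]
      rw [Finset.sum_congr rfl fun p _ => this p]
      have htr2 : (((B:ℝ)⁻¹ • C) * Y⁻¹).trace
          = ∑ p, ∑ q, ((B:ℝ)⁻¹ * C p q) * Y⁻¹ q p := by
        simp [Matrix.trace, Matrix.diag, Matrix.mul_apply, Matrix.smul_apply, smul_eq_mul]
      rw [htr2]
      simp [measure_univ]
    calc ∫ ω, nuclearNorm (D ω) ∂μ ≤ ∫ ω, g ω ∂μ := by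
          refine integral_mono_of_nonneg ?_ hgInt ?_
          · filter_upwards with ω; exact nuclearNorm_nonneg' (D ω)
          · filter_upwards with ω; exact hle ω
      _ = ((((B:ℝ)⁻¹ • C) * Y⁻¹).trace + Y.trace) / 2 := hgint_eq
  -- positive semidefinite square root of B⁻¹ • C
  have hBC : (((B:ℝ)⁻¹) • C).PosSemidef := posSemidef_smul_real (by positivity) hCpsd
  set S := hBC.sqrt with hSdef
  have hS : S.PosSemidef := hBC.posSemidef_sqrt
  have hS2 : S * S = (B:ℝ)⁻¹ • C := hBC.sqrt_mul_self
  -- the ε-perturbation bound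
  have hεbound : ∀ ε : ℝ, 0 < ε →
      ∫ ω, nuclearNorm (M - Matrix.of fun i j => (B : ℝ)⁻¹ * ∑ b, G b ω i j) ∂μ
        ≤ S.trace + ε * m / 2 := by
    intro ε hε
    have hone : ((ε • 1 : Matrix (Fin m) (Fin m) ℝ)).PosDef := by
      rw [smul_one_eq_diagonal]
      exact posDef_diagonal_iff.mpr fun i => hε
    have hY : (S + ε • 1).PosDef := Matrix.PosDef.posSemidef_add hS hone
    have hrest := main _ hY
    set Y := S + ε • (1 : Matrix (Fin m) (Fin m) ℝ) with hYdef
    have hYdet : IsUnit Y.det := isUnit_iff_isUnit_det _ |>.1 hY.isUnit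
    have h1 : Y.trace = S.trace + ε * m := by
      rw [hYdef, trace_add, trace_smul, trace_one]
      simp [smul_eq_mul]
    have h2 : (((B:ℝ)⁻¹ • C) * Y⁻¹).trace ≤ S.trace := by
      rw [← hS2]
      have hc : (S * S * Y⁻¹).trace = (S * Y⁻¹ * S).trace := by
        rw [trace_mul_cycle, trace_mul_cycle]
      have hStr : S.trace = (S * Y⁻¹ * Y).trace := by
        rw [Matrix.mul_assoc, Matrix.nonsing_inv_mul Y hYdet, Matrix.mul_one]
      have key : S.trace - (S * Y⁻¹ * S).trace = ε * (S * Y⁻¹).trace := by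
        rw [hStr, ← trace_sub, ← Matrix.mul_sub]
        have hYS : Y - S = ε • (1 : Matrix (Fin m) (Fin m) ℝ) := by
          rw [hYdef]; abel
        rw [hYS, Matrix.mul_smul, Matrix.mul_one, trace_smul, smul_eq_mul]
      have hpos : 0 ≤ (S * Y⁻¹).trace :=
        trace_mul_nonneg_of_posSemidef hS hY.inv.posSemidef
      rw [hc]
      nlinarith
    calc ∫ ω, nuclearNorm (M - Matrix.of fun i j => (B : ℝ)⁻¹ * ∑ b, G b ω i j) ∂μ
        ≤ ((((B:ℝ)⁻¹ • C) * Y⁻¹).trace + Y.trace) / 2 := hrest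
      _ ≤ (S.trace + (S.trace + ε * m)) / 2 := by rw [h1]; linarith
      _ = S.trace + ε * m / 2 := by ring
  -- pass to the limit ε → 0
  have hlim : ∫ ω, nuclearNorm (M - Matrix.of fun i j => (B : ℝ)⁻¹ * ∑ b, G b ω i j) ∂μ
      ≤ S.trace := by
    refine le_of_forall_pos_le_add fun ε hε => ?_
    have hδ : (0:ℝ) < ε / (m + 1) := by positivity
    refine (hεbound _ hδ).trans ?_
    have : ε / (m + 1) * m / 2 ≤ ε := by
      rw [div_mul_eq_mul_div, div_div]
      rw [div_le_iff₀ (by positivity)]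
      nlinarith [hε.le]
    linarith
  -- identify S.trace with hCpsd.sqrt.trace / √B
  have hsqrtB : (0:ℝ) < Real.sqrt B := Real.sqrt_pos.mpr hBpos
  have hSeq : S = (Real.sqrt B)⁻¹ • hCpsd.sqrt := by
    have hA : ((Real.sqrt B)⁻¹ • hCpsd.sqrt).PosSemidef :=
      posSemidef_smul_real (by positivity) hCpsd.posSemidef_sqrt
    have hsq_eq : ((Real.sqrt B)⁻¹ • hCpsd.sqrt) ^ 2 = (B:ℝ)⁻¹ • C := by
      rw [smul_pow, hCpsd.sq_sqrt]
      congr 1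
      rw [inv_pow, Real.sq_sqrt hBpos.le]
    exact (hA.eq_sqrt_of_sq_eq hBC hsq_eq).symm
  rw [hSeq, trace_smul, smul_eq_mul] at hlim
  rwa [div_eq_inv_mul]
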